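/- Let G be a finite simple graph on a vertex set V and let G' be a spanning subgraph of G (a simple graph on V with G'.Adj ≤ G.Adj). If s ≤ 0 or s ≥ 1, then λ_max(M_{G'}(s)) ≤ λ_max(M_G(s)). -/

import Mathlib

open scoped Classical
open Matrix Polynomial

/-- The deformed Laplacian matrix `M_G(s) = I - s·A(G) + s²·(D(G) - I)` of a finite
simple graph `G`. -/
noncomputable def deformedLap {V : Type*} [Fintype V] (G : SimpleGraph V) (s : ℝ) :
    Matrix V V ℝ :=
  1 - s • G.adjMatrix ℝ + s ^ 2 • (Matrix.diagonal (fun v => (G.degree v : ℝ)) - 1)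

/-- The largest (real) eigenvalue of a matrix: the supremum of its real spectrum.
For a real symmetric matrix this is the maximal eigenvalue (the paper's `ρ`). -/
noncomputable def lamMax {n : Type*} [Fintype n] (M : Matrix n n ℝ) : ℝ :=
  sSup (spectrum ℝ M)

section Aux

variable {V : Type*} [Fintype V]

lemma deformedLap_apply (G : SimpleGraph V) (s : ℝ) (u v : V) :
    deformedLap G s u v =
      (if u = v then 1 else 0) - s * (if G.Adj u v then 1 else 0)
        + s ^ 2 * ((if u = v then (G.degree u : ℝ) else 0) - if u = v then 1 else 0) := by
  rcases eq_or_ne u v with h | h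
  · subst h
    simp [deformedLap, Matrix.add_apply, Matrix.sub_apply, Matrix.smul_apply,
      Matrix.one_apply, Matrix.diagonal_apply, SimpleGraph.adjMatrix_apply, smul_eq_mul]
  · simp [deformedLap, Matrix.add_apply, Matrix.sub_apply, Matrix.smul_apply,
      Matrix.one_apply, Matrix.diagonal_apply, SimpleGraph.adjMatrix_apply, smul_eq_mul, h]

lemma deformedLap_isHermitian (G : SimpleGraph V) (s : ℝ) :
    (deformedLap G s).IsHermitian := by
  rw [Matrix.IsHermitian, Matrix.conjTranspose_eq_transpose_of_trivial]
  ext u v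
  rw [Matrix.transpose_apply, deformedLap_apply, deformedLap_apply]
  by_cases h : u = v
  · subst h; rfl
  · simp [h, Ne.symm h, G.adj_comm u v]

lemma rayleigh_le {n : Type*} [Fintype n] {A : Matrix n n ℝ}
    (hA : A.IsHermitian) (x : n → ℝ) :
    x ⬝ᵥ (A *ᵥ x) ≤ lamMax A * (x ⬝ᵥ x) := by
  letI : DecidableEq n := fun a b => Classical.propDecidable _
  have hbdd : BddAbove (spectrum ℝ A) := (Matrix.finite_spectrum A).bddAbove
  have hev : ∀ i, hA.eigenvalues i ≤ lamMax A := fun i =>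
    le_csSup hbdd (hA.eigenvalues_mem_spectrum_real i)
  set U : Matrix n n ℝ := (hA.eigenvectorUnitary : Matrix n n ℝ) with hU
  have hUstar : star U = Uᵀ := by
    rw [Matrix.star_eq_conjTranspose, Matrix.conjTranspose_eq_transpose_of_trivial]
  have hUU : U * Uᵀ = 1 := by
    rw [← hUstar]; exact (Matrix.mem_unitaryGroup_iff).mp (hA.eigenvectorUnitary).2
  have hyy : (x ᵥ* U) ⬝ᵥ (x ᵥ* U) = x ⬝ᵥ x := by
    nth_rewrite 2 [← Matrix.mulVec_transpose]
    rw [← Matrix.dotProduct_mulVec, Matrix.mulVec_mulVec, hUU, Matrix.one_mulVec]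
  have hquad : x ⬝ᵥ (A *ᵥ x) = ∑ i, hA.eigenvalues i * ((x ᵥ* U) i * (x ᵥ* U) i) := by
    conv_lhs => rw [hA.spectral_theorem, Unitary.conjStarAlgAut_apply, ← hU]
    rw [← Matrix.mulVec_mulVec, ← Matrix.mulVec_mulVec, Matrix.dotProduct_mulVec,
      hUstar, Matrix.mulVec_transpose, RCLike.ofReal_real_eq_id]
    simp only [dotProduct, Matrix.mulVec_diagonal, Function.comp, id]
    exact Finset.sum_congr rfl fun i _ => by ring
  rw [hquad, ← hyy]
  have hL : lamMax A * ((x ᵥ* U) ⬝ᵥ (x ᵥ* U)) = ∑ i, lamMax A * ((x ᵥ* U) i * (x ᵥ* U) i) := by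
    rw [dotProduct, Finset.mul_sum]
  rw [hL]
  refine Finset.sum_le_sum fun i _ => ?_
  exact mul_le_mul_of_nonneg_right (hev i) (mul_self_nonneg _)

lemma exists_eigvec {n : Type*} [Fintype n] [DecidableEq n] {A : Matrix n n ℝ} {μ : ℝ}
    (h : μ ∈ spectrum ℝ A) : ∃ v, v ≠ 0 ∧ A *ᵥ v = μ • v := by
  rw [spectrum.mem_iff] at h
  have hdet : (algebraMap ℝ (Matrix n n ℝ) μ - A).det = 0 := by
    by_contra hd
    exact h ((Matrix.isUnit_iff_isUnit_det _).mpr (isUnit_iff_ne_zero.mpr hd))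
  obtain ⟨v, hv0, hv⟩ := (Matrix.exists_mulVec_eq_zero_iff).mpr hdet
  refine ⟨v, hv0, ?_⟩
  rw [Matrix.sub_mulVec] at hv
  have h2 : (algebraMap ℝ (Matrix n n ℝ) μ) *ᵥ v = μ • v := by
    ext i
    simp [Matrix.algebraMap_eq_diagonal, Matrix.mulVec_diagonal]
  rw [h2] at hv
  have := sub_eq_zero.mp hv
  exact this.symm

lemma quad_mono (G G' : SimpleGraph V) (hsub : G' ≤ G) (s : ℝ) (y : V → ℝ)
    (hy : 1 ≤ s ∨ (s ≤ 0 ∧ ∀ i, 0 ≤ y i)) :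
    y ⬝ᵥ (deformedLap G' s *ᵥ y) ≤ y ⬝ᵥ (deformedLap G s *ᵥ y) := by
  rw [← sub_nonneg]
  set c : V → V → ℝ := fun u v => if G.Adj u v ∧ ¬ G'.Adj u v then 1 else 0 with hc
  have hcsymm : ∀ u v, c u v = c v u := by
    intro u v; simp only [hc]; rw [G.adj_comm, G'.adj_comm]
  have hcnn : ∀ u v, 0 ≤ c u v := by
    intro u v; simp only [hc]; split <;> norm_num
  have hind : ∀ u v, (if G.Adj u v then (1:ℝ) else 0) - (if G'.Adj u v then 1 else 0) = c u v := by
    intro u v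
    by_cases h' : G'.Adj u v
    · simp [hc, h', hsub h']
    · by_cases h : G.Adj u v <;> simp [hc, h, h']
  have hdeg : ∀ u, ((G.degree u : ℝ) - (G'.degree u : ℝ)) = ∑ v, c u v := by
    intro u
    have hG : (G.degree u : ℝ) = ∑ v, if G.Adj u v then (1:ℝ) else 0 := by
      rw [Finset.sum_boole, SimpleGraph.degree]
      congr 2
      ext v
      simp [SimpleGraph.mem_neighborFinset]
    have hG' : (G'.degree u : ℝ) = ∑ v, if G'.Adj u v then (1:ℝ) else 0 := by
      rw [Finset.sum_boole, SimpleGraph.degree]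
      congr 2
      ext v
      simp [SimpleGraph.mem_neighborFinset]
    rw [hG, hG', ← Finset.sum_sub_distrib]
    exact Finset.sum_congr rfl fun v _ => hind u v
  have entry_diff : ∀ u v, deformedLap G s u v - deformedLap G' s u v =
      s ^ 2 * (if u = v then ((G.degree u : ℝ) - (G'.degree u : ℝ)) else 0) - s * c u v := by
    intro u v
    rw [deformedLap_apply, deformedLap_apply, ← hind u v]
    by_cases h : u = v
    · subst h
      simp only [eq_self_iff_true, if_true, G.irrefl, G'.irrefl, if_false]
      ring
    · simp only [if_neg h]
      split_ifs <;> ring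
  have key : y ⬝ᵥ (deformedLap G s *ᵥ y) - y ⬝ᵥ (deformedLap G' s *ᵥ y)
      = ∑ u, ∑ v, c u v * (s ^ 2 * (y u * y u) - s * (y u * y v)) := by
    have expand : ∀ (M : Matrix V V ℝ), y ⬝ᵥ (M *ᵥ y) = ∑ u, ∑ v, y u * (M u v * y v) := by
      intro M
      simp only [dotProduct, Matrix.mulVec, Finset.mul_sum]
    rw [expand, expand, ← Finset.sum_sub_distrib]
    refine Finset.sum_congr rfl fun u _ => ?_
    rw [← Finset.sum_sub_distrib]
    have lhs_eq : ∑ v, (y u * (deformedLap G s u v * y v) - y u * (deformedLap G' s u v * y v))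
        = ∑ v, ((s ^ 2 * (if u = v then ((G.degree u : ℝ) - (G'.degree u : ℝ)) else 0))
            * (y u * y v) - s * c u v * (y u * y v)) := by
      refine Finset.sum_congr rfl fun v _ => ?_
      have h1 : y u * (deformedLap G s u v * y v) - y u * (deformedLap G' s u v * y v)
          = (deformedLap G s u v - deformedLap G' s u v) * (y u * y v) := by ring
      rw [h1, entry_diff u v]
      ring
    rw [lhs_eq, Finset.sum_sub_distrib]
    have h2 : ∑ v, (s ^ 2 * (if u = v then ((G.degree u : ℝ) - (G'.degree u : ℝ)) else 0))
        * (y u * y v) = ∑ v, c u v * (s ^ 2 * (y u * y u)) := by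
      rw [Finset.sum_eq_single u]
      · rw [if_pos rfl, hdeg u]
        have h3 : s ^ 2 * (∑ v, c u v) * (y u * y u)
            = (∑ v, c u v) * (s ^ 2 * (y u * y u)) := by ring
        rw [h3, Finset.sum_mul]
      · intro b _ hb
        rw [if_neg (Ne.symm hb)]
        ring
      · intro h
        exact absurd (Finset.mem_univ u) h
    rw [h2, ← Finset.sum_sub_distrib]
    exact Finset.sum_congr rfl fun v _ => by ring
  rw [key]
  set T := ∑ u, ∑ v, c u v * (s ^ 2 * (y u * y u) - s * (y u * y v)) with hT
  have hswap : T = ∑ u, ∑ v, c u v * (s ^ 2 * (y v * y v) - s * (y u * y v)) := by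
    rw [hT, Finset.sum_comm]
    refine Finset.sum_congr rfl fun u _ => Finset.sum_congr rfl fun v _ => ?_
    rw [hcsymm v u]; ring
  have h2T : 2 * T = ∑ u, ∑ v, c u v *
      (s ^ 2 * (y u * y u) + s ^ 2 * (y v * y v) - 2 * s * (y u * y v)) := by
    have : 2 * T = T + T := by ring
    rw [this]
    nth_rewrite 2 [hswap]
    rw [hT, ← Finset.sum_add_distrib]
    refine Finset.sum_congr rfl fun u _ => ?_
    rw [← Finset.sum_add_distrib]
    refine Finset.sum_congr rfl fun v _ => by ring
  have hterm : ∀ u v, 0 ≤ s ^ 2 * (y u * y u) + s ^ 2 * (y v * y v) - 2 * s * (y u * y v) := by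
    intro u v
    rcases hy with h1 | ⟨h0, hnn⟩
    · have hs2 : 0 ≤ (s ^ 2 - 1) * (y v * y v) :=
        mul_nonneg (by nlinarith) (mul_self_nonneg _)
      nlinarith [sq_nonneg (s * y u - y v)]
    · have := mul_nonneg (hnn u) (hnn v)
      nlinarith [sq_nonneg (s * y u), sq_nonneg (s * y v),
        mul_nonneg (neg_nonneg.mpr h0) this]
  have hsum : 0 ≤ 2 * T := by
    rw [h2T]
    exact Finset.sum_nonneg fun u _ => Finset.sum_nonneg fun v _ =>
      mul_nonneg (hcnn u v) (hterm u v)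
  linarith

lemma abs_quad (M : Matrix V V ℝ) (hoff : ∀ u v, u ≠ v → 0 ≤ M u v) (x : V → ℝ) :
    x ⬝ᵥ (M *ᵥ x) ≤ (fun i => |x i|) ⬝ᵥ (M *ᵥ fun i => |x i|) := by
  simp only [dotProduct, Matrix.mulVec, dotProduct, Finset.mul_sum]
  refine Finset.sum_le_sum fun u _ => Finset.sum_le_sum fun v _ => ?_
  by_cases h : u = v
  · subst h
    have : |x u| * (M u u * |x u|) = M u u * (x u * x u) := by
      rw [← abs_mul_abs_self (x u)]; ring
    rw [this]; nlinarith [le_refl (M u u * (x u * x u))]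
  · have h1 : x u * (M u v * x v) = M u v * (x u * x v) := by ring
    have h2 : |x u| * (M u v * |x v|) = M u v * |x u * x v| := by
      rw [abs_mul]; ring
    rw [h1, h2]
    exact mul_le_mul_of_nonneg_left (le_abs_self _) (hoff u v h)

end Aux

/-- For a spanning subgraph `G' ≤ G` and `s ≤ 0` or `s ≥ 1`, the largest eigenvalue
of the deformed Laplacian does not increase. -/
theorem stmt_2 {V : Type*} [Fintype V] (G G' : SimpleGraph V) (hsub : G' ≤ G)
    (s : ℝ) (hs : s ≤ 0 ∨ 1 ≤ s) :
    lamMax (deformedLap G' s) ≤ lamMax (deformedLap G s) := by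
  letI : DecidableEq V := fun a b => Classical.propDecidable _
  rcases isEmpty_or_nonempty V with hV | hV
  · have : deformedLap G' s = deformedLap G s := by
      ext i j; exact isEmptyElim i
    rw [this]
  · have hH' := deformedLap_isHermitian G' s
    have hH := deformedLap_isHermitian G s
    have hne : (spectrum ℝ (deformedLap G' s)).Nonempty :=
      ⟨_, hH'.eigenvalues_mem_spectrum_real (Classical.arbitrary V)⟩
    unfold lamMax
    refine csSup_le hne fun μ hμ => ?_
    obtain ⟨v, hv0, hv⟩ := exists_eigvec hμ
    have hvv : 0 < v ⬝ᵥ v := by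
      have hnn : 0 ≤ v ⬝ᵥ v := Finset.sum_nonneg fun i _ => mul_self_nonneg _
      have hne0 : v ⬝ᵥ v ≠ 0 := fun h => hv0 (dotProduct_self_eq_zero.mp h)
      exact lt_of_le_of_ne hnn (Ne.symm hne0)
    have hquad : v ⬝ᵥ (deformedLap G' s *ᵥ v) = μ * (v ⬝ᵥ v) := by
      rw [hv, dotProduct_smul, smul_eq_mul]
    have hmain : μ * (v ⬝ᵥ v) ≤ lamMax (deformedLap G s) * (v ⬝ᵥ v) := by
      rcases hs with hs0 | hs1
      · set y : V → ℝ := fun i => |v i| with hy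
        have h1 : v ⬝ᵥ (deformedLap G' s *ᵥ v) ≤ y ⬝ᵥ (deformedLap G' s *ᵥ y) := by
          refine abs_quad _ (fun a b hab => ?_) v
          rw [deformedLap_apply]
          simp only [if_neg hab]
          have : (0:ℝ) ≤ -s * (if G'.Adj a b then 1 else 0) := by
            apply mul_nonneg (by linarith); split <;> norm_num
          nlinarith
        have h2 : y ⬝ᵥ (deformedLap G' s *ᵥ y) ≤ y ⬝ᵥ (deformedLap G s *ᵥ y) :=
          quad_mono G G' hsub s y (Or.inr ⟨hs0, fun i => abs_nonneg _⟩)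
        have h3 : y ⬝ᵥ (deformedLap G s *ᵥ y) ≤ lamMax (deformedLap G s) * (y ⬝ᵥ y) :=
          rayleigh_le hH y
        have h4 : y ⬝ᵥ y = v ⬝ᵥ v := by
          refine Finset.sum_congr rfl fun i _ => ?_
          simp [hy, abs_mul_abs_self]
        rw [← hquad]
        calc v ⬝ᵥ (deformedLap G' s *ᵥ v) ≤ y ⬝ᵥ (deformedLap G s *ᵥ y) := le_trans h1 h2
          _ ≤ lamMax (deformedLap G s) * (y ⬝ᵥ y) := h3
          _ = lamMax (deformedLap G s) * (v ⬝ᵥ v) := by rw [h4]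
      · rw [← hquad]
        calc v ⬝ᵥ (deformedLap G' s *ᵥ v) ≤ v ⬝ᵥ (deformedLap G s *ᵥ v) :=
              quad_mono G G' hsub s v (Or.inl hs1)
          _ ≤ lamMax (deformedLap G s) * (v ⬝ᵥ v) := rayleigh_le hH v
    exact le_of_mul_le_mul_right hmain hvv
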